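/- Let $I$ be countable, $0 < \mu \le 1/2$, and let $P$ be the law of a stochastic chain $(X_{i,t})_{i \in I, t \in \mathbb{Z}}$ with values in $\{0,1\}$ such that, given the past, coordinates at each time are conditionally independent and each conditional spiking probability $p_i(x)$ satisfies $\mu \le p_i(x) \le 1 - \mu$. Then for every finite set $v \subset I \times \mathbb{Z}$ and every nonnegative function $f$ of $X_v$, $(2\mu)^{|v|} \, E_Q[f(X_v)] \le E_P[f(X_v)] \le (2(1-\mu))^{|v|} \, E_Q[f(X_v)]$, where $Q$ is the measure under which all $X_{i,t}$ are i.i.d. Bernoulli(1/2). -/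

import Mathlib

open MeasureTheory

/-- Core sandwich bound: the probability that the chain agrees with a fixed pattern `b`
on a finite set `v` lies between `μ ^ |v|` and `(1-μ) ^ |v|`. -/
lemma stmt13_core {Ω I : Type*} [Countable I] {m0 : MeasurableSpace Ω}
    (P : Measure Ω) [IsProbabilityMeasure P]
    (X : I × ℤ → Ω → Bool) (hX : ∀ p, Measurable (X p))
    (μ : ℝ) (hμ0 : 0 < μ) (hμ2 : μ ≤ 1 / 2)
    (𝓕 : ℤ → MeasurableSpace Ω)
    (h𝓕 : ∀ t, 𝓕 t =
      MeasurableSpace.comap (fun ω (p : { p : I × ℤ // p.2 ≤ t }) => X p.1 ω)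
        MeasurableSpace.pi)
    (hcondindep : ∀ (t : ℤ) (J : Finset I) (f : I → Bool),
      (P[Set.indicator {ω | ∀ j ∈ J, X (j, t) ω = f j} (fun _ => (1 : ℝ)) | 𝓕 (t - 1)])
        =ᵐ[P] fun ω =>
          ∏ j ∈ J, (P[Set.indicator {ω | X (j, t) ω = f j} (fun _ => (1 : ℝ)) | 𝓕 (t - 1)]) ω)
    (hbound : ∀ (i : I) (t : ℤ), ∀ᵐ ω ∂P,
      μ ≤ (P[Set.indicator {ω | X (i, t) ω = true} (fun _ => (1 : ℝ)) | 𝓕 (t - 1)]) ω ∧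
      (P[Set.indicator {ω | X (i, t) ω = true} (fun _ => (1 : ℝ)) | 𝓕 (t - 1)]) ω ≤ 1 - μ)
    (b : (I × ℤ) → Bool) :
    ∀ v : Finset (I × ℤ),
      μ ^ v.card ≤ (P {ω | ∀ p ∈ v, X p ω = b p}).toReal ∧
      (P {ω | ∀ p ∈ v, X p ω = b p}).toReal ≤ (1 - μ) ^ v.card := by
  classical
  have hμ1 : (0:ℝ) < 1 - μ := by linarith
  -- measurability of cylinder events
  have hA_meas : ∀ (s : Finset (I × ℤ)), MeasurableSet {ω | ∀ p ∈ s, X p ω = b p} := by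
    intro s
    have : {ω | ∀ p ∈ s, X p ω = b p} = ⋂ p ∈ s, X p ⁻¹' {b p} := by
      ext ω; simp
    rw [this]
    exact MeasurableSet.biInter s.countable_toSet
      (fun p _ => (hX p) (measurableSet_singleton _))
  intro v
  induction v using Finset.strongInduction with
  | _ v ih =>
    rcases v.eq_empty_or_nonempty with rfl | hne
    · simp
    -- t is the maximal time appearing in v
    have hvim : (v.image Prod.snd).Nonempty := hne.image _
    set t : ℤ := (v.image Prod.snd).max' hvim with ht
    have hle : ∀ p ∈ v, p.2 ≤ t :=
      fun p hp => Finset.le_max' _ p.2 (Finset.mem_image_of_mem Prod.snd hp)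
    set w : Finset (I × ℤ) := v.filter (fun p => p.2 = t) with hwdef
    set u : Finset (I × ℤ) := v.filter (fun p => ¬ p.2 = t) with hudef
    have hw_ne : w.Nonempty := by
      obtain ⟨p, hp, hpt⟩ := Finset.mem_image.1 ((v.image Prod.snd).max'_mem hvim)
      exact ⟨p, Finset.mem_filter.2 ⟨hp, hpt⟩⟩
    have hu_ssub : u ⊂ v := by
      refine ⟨Finset.filter_subset _ _, fun hsub => ?_⟩
      obtain ⟨p, hp⟩ := hw_ne
      have hpv : p ∈ v := (Finset.mem_filter.1 hp).1
      have := (Finset.mem_filter.1 (hsub hpv)).2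
      exact this (Finset.mem_filter.1 hp).2
    have hcards : w.card + u.card = v.card :=
      Finset.card_filter_add_card_filter_not (fun p : I × ℤ => p.2 = t)
    -- the σ-algebra of the past
    have hm : 𝓕 (t - 1) ≤ m0 := by
      rw [h𝓕]
      exact Measurable.comap_le (measurable_pi_lambda _ fun q => hX q.1)
    -- sets
    set Au : Set Ω := {ω | ∀ p ∈ u, X p ω = b p} with hAudef
    set Aw : Set Ω := {ω | ∀ p ∈ w, X p ω = b p} with hAwdef
    have hAu_m0 : MeasurableSet Au := hA_meas u
    have hAw_m0 : MeasurableSet Aw := hA_meas w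
    have hsplit : {ω | ∀ p ∈ v, X p ω = b p} = Au ∩ Aw := by
      ext ω
      simp only [hAudef, hAwdef, Set.mem_inter_iff, Set.mem_setOf_eq, hudef, hwdef,
        Finset.mem_filter]
      constructor
      · exact fun h => ⟨fun p hp => h p hp.1, fun p hp => h p hp.1⟩
      · rintro ⟨h1, h2⟩ p hp
        by_cases hpt : p.2 = t
        · exact h2 p ⟨hp, hpt⟩
        · exact h1 p ⟨hp, hpt⟩
    -- Au is measurable w.r.t. the past
    have hu_le : ∀ p ∈ u, p.2 ≤ t - 1 := by
      intro p hp
      have := Finset.mem_filter.1 hp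
      have h1 := hle p this.1
      have h2 := this.2
      omega
    have hAu_meas : MeasurableSet[𝓕 (t - 1)] Au := by
      rw [h𝓕]
      refine ⟨{y : { p : I × ℤ // p.2 ≤ t - 1 } → Bool | ∀ q, q.1 ∈ u → y q = b q.1}, ?_, ?_⟩
      · have : {y : { p : I × ℤ // p.2 ≤ t - 1 } → Bool | ∀ q, q.1 ∈ u → y q = b q.1}
            = ⋂ (q : { p : I × ℤ // p.2 ≤ t - 1 }), ⋂ (_ : q.1 ∈ u),
                (fun y => y q) ⁻¹' {b q.1} := by
          ext y; simp [Set.mem_iInter]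
        rw [this]
        exact MeasurableSet.iInter fun q => MeasurableSet.iInter fun _ =>
          (measurable_pi_apply q) (measurableSet_singleton _)
      · ext ω
        simp only [Set.mem_preimage, Set.mem_setOf_eq, hAudef]
        constructor
        · intro h p hp
          exact h ⟨p, hu_le p hp⟩ hp
        · intro h q hq
          exact h q.1 hq
    -- identify Aw with a time-t event over J
    set J : Finset I := w.image Prod.fst with hJdef
    have hwt : ∀ p ∈ w, p.2 = t := fun p hp => (Finset.mem_filter.1 hp).2
    have hJcard : J.card = w.card := by
      refine Finset.card_image_of_injOn ?_
      intro p hp q hq hpq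
      exact Prod.ext hpq ((hwt p hp).trans (hwt q hq).symm)
    have hAwJ : Aw = {ω | ∀ j ∈ J, X (j, t) ω = b (j, t)} := by
      ext ω
      simp only [hAwdef, Set.mem_setOf_eq]
      constructor
      · intro h j hj
        obtain ⟨p, hp, rfl⟩ := Finset.mem_image.1 hj
        have hpeq : (p.1, t) = p := Prod.ext rfl (hwt p hp).symm
        rw [hpeq]
        exact h p hp
      · intro h p hp
        have hpeq : p = (p.1, t) := Prod.ext rfl (hwt p hp)
        rw [hpeq]
        exact h p.1 (Finset.mem_image_of_mem _ hp)
    -- integrability of indicators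
    have hind_int : ∀ (s : Set Ω), MeasurableSet s →
        Integrable (Set.indicator s fun _ => (1:ℝ)) P :=
      fun s hs => (integrable_const 1).indicator hs
    -- each conditional factor lies in [μ, 1-μ]
    have hfactor : ∀ (j : I) (c : Bool), ∀ᵐ ω ∂P,
        μ ≤ (P[Set.indicator {ω | X (j, t) ω = c} (fun _ => (1:ℝ)) | 𝓕 (t - 1)]) ω ∧
        (P[Set.indicator {ω | X (j, t) ω = c} (fun _ => (1:ℝ)) | 𝓕 (t - 1)]) ω ≤ 1 - μ := by
      intro j c
      cases c
      · -- false case: indicator of the complement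
        have hset : {ω | X (j, t) ω = false} = {ω | X (j, t) ω = true}ᶜ := by
          ext ω; simp
        have hfun : Set.indicator {ω | X (j, t) ω = false} (fun _ => (1:ℝ))
            = (fun _ => (1:ℝ)) - Set.indicator {ω | X (j, t) ω = true} (fun _ => (1:ℝ)) := by
          rw [hset]
          funext ω
          by_cases h : ω ∈ {ω | X (j, t) ω = true} <;>
            simp [Set.indicator_apply, h]
        rw [hfun]
        have hmeas_true : MeasurableSet {ω | X (j, t) ω = true} := by
          have he : {ω | X (j, t) ω = true} = X (j, t) ⁻¹' {true} := rfl
          rw [he]; exact (hX (j, t)) (measurableSet_singleton true)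
        have hsub := condExp_sub (m := 𝓕 (t - 1)) (μ := P) (integrable_const (1:ℝ))
          (hind_int _ hmeas_true)
        have hconst := condExp_const (μ := P) hm (1:ℝ)
        filter_upwards [hsub, hbound j t] with ω h1 h2
        rw [h1]
        simp only [Pi.sub_apply, hconst]
        constructor <;> [linarith [h2.2]; linarith [h2.1]]
      · exact hbound j t
    -- the conditional expectation of the indicator of Aw is sandwiched a.e.
    have hAw_ind := hcondindep t J (fun j => b (j, t))
    have hall : ∀ᵐ ω ∂P, ∀ j ∈ J,
        μ ≤ (P[Set.indicator {ω | X (j, t) ω = b (j, t)} (fun _ => (1:ℝ)) | 𝓕 (t - 1)]) ω ∧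
        (P[Set.indicator {ω | X (j, t) ω = b (j, t)} (fun _ => (1:ℝ)) | 𝓕 (t - 1)]) ω ≤ 1 - μ :=
      (ae_ball_iff J.countable_toSet).2 fun j _ => hfactor j (b (j, t))
    have hsandwich : ∀ᵐ ω ∂P,
        μ ^ w.card ≤ (P[Set.indicator Aw (fun _ => (1:ℝ)) | 𝓕 (t - 1)]) ω ∧
        (P[Set.indicator Aw (fun _ => (1:ℝ)) | 𝓕 (t - 1)]) ω ≤ (1 - μ) ^ w.card := by
      rw [hAwJ]
      filter_upwards [hAw_ind, hall] with ω hω hallω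
      rw [hω]
      constructor
      · calc μ ^ w.card = ∏ _j ∈ J, μ := by rw [Finset.prod_const, hJcard]
          _ ≤ _ := Finset.prod_le_prod (fun j _ => hμ0.le) (fun j hj => (hallω j hj).1)
      · calc (∏ j ∈ J,
              (P[Set.indicator {ω | X (j, t) ω = b (j, t)} (fun _ => (1:ℝ)) | 𝓕 (t - 1)]) ω)
            ≤ ∏ _j ∈ J, (1 - μ) :=
              Finset.prod_le_prod (fun j hj => hμ0.le.trans (hallω j hj).1)
                (fun j hj => (hallω j hj).2)
          _ = (1 - μ) ^ w.card := by rw [Finset.prod_const, hJcard]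
    -- reduce the measure of the intersection to a set integral of the condexp
    have hint_w : Integrable (Set.indicator Aw fun _ => (1:ℝ)) P := hind_int Aw hAw_m0
    have key : (P (Au ∩ Aw)).toReal
        = ∫ ω in Au, (P[Set.indicator Aw (fun _ => (1:ℝ)) | 𝓕 (t - 1)]) ω ∂P := by
      rw [setIntegral_condExp hm hint_w hAu_meas,
        integral_indicator_const (1:ℝ) hAw_m0, measureReal_def, Measure.restrict_apply hAw_m0,
        Set.inter_comm, smul_eq_mul, mul_one]
    -- bounds on the set integral
    have hPu_fin : (P.restrict Au) Set.univ < ⊤ := by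
      rw [Measure.restrict_apply_univ]; exact measure_lt_top _ _
    have hconst_int : ∀ c : ℝ, IntegrableOn (fun _ => c) Au P := by
      intro c
      exact integrableOn_const (measure_lt_top _ _).ne
    have hcond_int : IntegrableOn
        (P[Set.indicator Aw (fun _ => (1:ℝ)) | 𝓕 (t - 1)]) Au P :=
      integrable_condExp.integrableOn
    have hlow : μ ^ w.card * (P Au).toReal ≤ (P (Au ∩ Aw)).toReal := by
      rw [key]
      calc μ ^ w.card * (P Au).toReal = ∫ _ω in Au, μ ^ w.card ∂P := by
            rw [setIntegral_const, smul_eq_mul, mul_comm, measureReal_def]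
        _ ≤ _ := setIntegral_mono_ae_restrict (hconst_int _) hcond_int
            (ae_restrict_of_ae (hsandwich.mono fun ω h => h.1))
    have hhigh : (P (Au ∩ Aw)).toReal ≤ (1 - μ) ^ w.card * (P Au).toReal := by
      rw [key]
      calc ∫ ω in Au, (P[Set.indicator Aw (fun _ => (1:ℝ)) | 𝓕 (t - 1)]) ω ∂P
          ≤ ∫ _ω in Au, (1 - μ) ^ w.card ∂P := setIntegral_mono_ae_restrict hcond_int
            (hconst_int _) (ae_restrict_of_ae (hsandwich.mono fun ω h => h.2))
        _ = (1 - μ) ^ w.card * (P Au).toReal := by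
            rw [setIntegral_const, smul_eq_mul, mul_comm, measureReal_def]
    obtain ⟨ih1, ih2⟩ := ih u hu_ssub
    rw [hsplit]
    constructor
    · calc μ ^ v.card = μ ^ w.card * μ ^ u.card := by rw [← pow_add, hcards]
        _ ≤ μ ^ w.card * (P Au).toReal :=
            mul_le_mul_of_nonneg_left ih1 (pow_nonneg hμ0.le _)
        _ ≤ (P (Au ∩ Aw)).toReal := hlow
    · calc (P (Au ∩ Aw)).toReal ≤ (1 - μ) ^ w.card * (P Au).toReal := hhigh
        _ ≤ (1 - μ) ^ w.card * (1 - μ) ^ u.card :=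
            mul_le_mul_of_nonneg_left ih2 (pow_nonneg hμ1.le _)
        _ = (1 - μ) ^ v.card := by rw [← pow_add, hcards]

/-- Change-of-measure lemma (Lemma 4): for a chain on `{0,1}^{I×ℤ}` whose coordinates,
given the past, are conditionally independent with conditional spiking probabilities in
`[μ, 1-μ]`, the expectation of any nonnegative cylindrical function `f` of `X_v` is
sandwiched between `(2μ)^{|v|}` and `(2(1-μ))^{|v|}` times its expectation under the
i.i.d. Bernoulli(1/2) measure. -/
theorem stmt13 {Ω I : Type*} [Countable I] [DecidableEq I] {m0 : MeasurableSpace Ω}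
    (P : Measure Ω) [IsProbabilityMeasure P]
    (X : I × ℤ → Ω → Bool) (hX : ∀ p, Measurable (X p))
    (μ : ℝ) (hμ0 : 0 < μ) (hμ2 : μ ≤ 1 / 2)
    (𝓕 : ℤ → MeasurableSpace Ω)
    (h𝓕 : ∀ t, 𝓕 t =
      MeasurableSpace.comap (fun ω (p : { p : I × ℤ // p.2 ≤ t }) => X p.1 ω)
        MeasurableSpace.pi)
    (hcondindep : ∀ (t : ℤ) (J : Finset I) (f : I → Bool),
      (P[Set.indicator {ω | ∀ j ∈ J, X (j, t) ω = f j} (fun _ => (1 : ℝ)) | 𝓕 (t - 1)])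
        =ᵐ[P] fun ω =>
          ∏ j ∈ J, (P[Set.indicator {ω | X (j, t) ω = f j} (fun _ => (1 : ℝ)) | 𝓕 (t - 1)]) ω)
    (hbound : ∀ (i : I) (t : ℤ), ∀ᵐ ω ∂P,
      μ ≤ (P[Set.indicator {ω | X (i, t) ω = true} (fun _ => (1 : ℝ)) | 𝓕 (t - 1)]) ω ∧
      (P[Set.indicator {ω | X (i, t) ω = true} (fun _ => (1 : ℝ)) | 𝓕 (t - 1)]) ω ≤ 1 - μ) :
    ∀ (v : Finset (I × ℤ)) (f : ((I × ℤ) → Bool) → ℝ),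
      (∀ x, 0 ≤ f x) →
      (∀ x y : (I × ℤ) → Bool, (∀ p ∈ v, x p = y p) → f x = f y) →
      (2 * μ) ^ v.card *
          ((1 / 2 : ℝ) ^ v.card *
            ∑ g : (↥v → Bool), f (fun p => if h : p ∈ v then g ⟨p, h⟩ else false))
        ≤ ∫ ω, f (fun p => X p ω) ∂P ∧
      ∫ ω, f (fun p => X p ω) ∂P
        ≤ (2 * (1 - μ)) ^ v.card *
            ((1 / 2 : ℝ) ^ v.card *
              ∑ g : (↥v → Bool), f (fun p => if h : p ∈ v then g ⟨p, h⟩ else false)) := by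
  classical
  intro v f hf0 hfcyl
  have hμ1 : (0:ℝ) < 1 - μ := by linarith
  -- extension of a pattern on v to all of I × ℤ
  set ext : (↥v → Bool) → ((I × ℤ) → Bool) :=
    fun g p => if h : p ∈ v then g ⟨p, h⟩ else false with hextdef
  -- measurable cylinder sets
  have hA_meas : ∀ (c : (I × ℤ) → Bool), MeasurableSet {ω | ∀ p ∈ v, X p ω = c p} := by
    intro c
    have : {ω | ∀ p ∈ v, X p ω = c p} = ⋂ p ∈ v, X p ⁻¹' {c p} := by ext ω; simp
    rw [this]
    exact MeasurableSet.biInter v.countable_toSet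
      (fun p _ => (hX p) (measurableSet_singleton _))
  -- pointwise decomposition of f ∘ X over patterns
  have hdecomp : ∀ ω, f (fun p => X p ω)
      = ∑ g : (↥v → Bool), f (ext g) *
          Set.indicator {ω | ∀ p ∈ v, X p ω = ext g p} (fun _ => (1:ℝ)) ω := by
    intro ω
    set g0 : ↥v → Bool := fun q => X q.1 ω with hg0
    rw [Finset.sum_eq_single_of_mem g0 (Finset.mem_univ _)]
    · have hmem : ω ∈ {ω | ∀ p ∈ v, X p ω = ext g0 p} := by
        intro p hp
        simp only [hextdef, hp, dif_pos, hg0]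
      rw [Set.indicator_of_mem hmem, mul_one]
      refine hfcyl _ _ fun p hp => ?_
      simp only [hextdef, hp, dif_pos, hg0]
    · intro g _ hne
      have hnot : ω ∉ {ω | ∀ p ∈ v, X p ω = ext g p} := by
        intro hmem
        apply hne
        funext q
        have := hmem q.1 q.2
        simp only [hextdef, q.2, dif_pos] at this
        simp only [hg0]
        exact this.symm
      rw [Set.indicator_of_notMem hnot, mul_zero]
  -- the integral as a finite sum of weighted probabilities
  have hint : ∫ ω, f (fun p => X p ω) ∂P
      = ∑ g : (↥v → Bool), f (ext g) * (P {ω | ∀ p ∈ v, X p ω = ext g p}).toReal := by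
    calc ∫ ω, f (fun p => X p ω) ∂P
        = ∫ ω, (∑ g : (↥v → Bool), f (ext g) *
            Set.indicator {ω | ∀ p ∈ v, X p ω = ext g p} (fun _ => (1:ℝ)) ω) ∂P := by
          congr 1; funext ω; exact hdecomp ω
      _ = ∑ g : (↥v → Bool), ∫ ω, f (ext g) *
            Set.indicator {ω | ∀ p ∈ v, X p ω = ext g p} (fun _ => (1:ℝ)) ω ∂P := by
          refine integral_finset_sum _ fun g _ => ?_
          exact (((integrable_const (1:ℝ)).indicator (hA_meas (ext g))).const_mul _)
      _ = ∑ g : (↥v → Bool), f (ext g) * (P {ω | ∀ p ∈ v, X p ω = ext g p}).toReal := by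
          refine Finset.sum_congr rfl fun g _ => ?_
          rw [integral_const_mul, integral_indicator_const (1:ℝ) (hA_meas (ext g)),
            smul_eq_mul, mul_one, measureReal_def]
  -- core probability bounds
  have hcore := stmt13_core P X hX μ hμ0 hμ2 𝓕 h𝓕 hcondindep hbound
  -- rewrite the target constants
  have hS0 : (0:ℝ) ≤ ∑ g : (↥v → Bool), f (ext g) :=
    Finset.sum_nonneg fun g _ => hf0 _
  have hconst1 : (2 * μ) ^ v.card * ((1 / 2 : ℝ) ^ v.card *
      ∑ g : (↥v → Bool), f (ext g)) = μ ^ v.card * ∑ g : (↥v → Bool), f (ext g) := by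
    rw [← mul_assoc, ← mul_pow]
    congr 2
    ring
  have hconst2 : (2 * (1 - μ)) ^ v.card * ((1 / 2 : ℝ) ^ v.card *
      ∑ g : (↥v → Bool), f (ext g)) = (1 - μ) ^ v.card * ∑ g : (↥v → Bool), f (ext g) := by
    rw [← mul_assoc, ← mul_pow]
    congr 2
    ring
  constructor
  · rw [hint, hconst1, Finset.mul_sum]
    refine Finset.sum_le_sum fun g _ => ?_
    rw [mul_comm (μ ^ v.card)]
    exact mul_le_mul_of_nonneg_left (hcore (ext g) v).1 (hf0 _)
  · rw [hint, hconst2, Finset.mul_sum]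
    refine Finset.sum_le_sum fun g _ => ?_
    rw [mul_comm ((1 - μ) ^ v.card)]
    exact mul_le_mul_of_nonneg_left (hcore (ext g) v).2 (hf0 _)
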